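/- Let V be an m-dimensional linear subspace of ℝⁿ, 0 < α < 1, and A ⊂ ℝⁿ. Then A is (V, α)-planar if and only if there is a function f : proj_V(A) → V⊥ with Lipschitz constant α/√(1 − α²) such that A = {v + f(v) : v ∈ proj_V(A)} (identifying ℝⁿ with V ⊕ V⊥). -/

import Mathlib

open Metric Set Filter
open scoped RealInnerProductSpace

noncomputable def projV {n : ℕ} (V : Submodule ℝ (EuclideanSpace ℝ (Fin n)))
    (x : EuclideanSpace ℝ (Fin n)) : EuclideanSpace ℝ (Fin n) :=
  (V.orthogonalProjectionOnto x : EuclideanSpace ℝ (Fin n))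

/-- `A` is `(V, α)`-planar: `A ⊆ X(x, V, α)` for every `x ∈ A`. -/
def IsPlanar {n : ℕ} (V : Submodule ℝ (EuclideanSpace ℝ (Fin n))) (α : ℝ)
    (A : Set (EuclideanSpace ℝ (Fin n))) : Prop :=
  ∀ x ∈ A, ∀ y ∈ A, ‖projV Vᗮ (y - x)‖ ≤ α * ‖y - x‖

/-- The open half-space `H(x, θ) = {y : (y - x)·θ > 0}`. -/
def HS {n : ℕ} (x θ : EuclideanSpace ℝ (Fin n)) : Set (EuclideanSpace ℝ (Fin n)) :=
  {y | 0 < ⟪y - x, θ⟫}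

lemma projV_add_projV_orthogonal {n : ℕ} (V : Submodule ℝ (EuclideanSpace ℝ (Fin n)))
    (z : EuclideanSpace ℝ (Fin n)) : projV V z + projV Vᗮ z = z :=
  Submodule.starProjection_add_starProjection_orthogonal (K := V) z

lemma projV_pyth {n : ℕ} (V : Submodule ℝ (EuclideanSpace ℝ (Fin n)))
    (z : EuclideanSpace ℝ (Fin n)) :
    ‖z‖ ^ 2 = ‖projV V z‖ ^ 2 + ‖projV Vᗮ z‖ ^ 2 := by
  have hz := projV_add_projV_orthogonal V z
  have horth : ⟪projV V z, projV Vᗮ z⟫ = 0 :=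
    Submodule.inner_right_of_mem_orthogonal (Submodule.orthogonalProjectionOnto V z).2
      (Submodule.orthogonalProjectionOnto Vᗮ z).2
  calc ‖z‖ ^ 2 = ‖projV V z + projV Vᗮ z‖ ^ 2 := by rw [hz]
    _ = ‖projV V z‖ ^ 2 + ‖projV Vᗮ z‖ ^ 2 := by
        rw [norm_add_sq_real, horth]; ring

lemma projV_sub {n : ℕ} (V : Submodule ℝ (EuclideanSpace ℝ (Fin n)))
    (x y : EuclideanSpace ℝ (Fin n)) : projV V (x - y) = projV V x - projV V y := by
  simp [projV, map_sub]

/-- `A` is `(V, α)`-planar iff it is the graph over `proj_V(A)` of an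
`(α/√(1-α²))`-Lipschitz map with values in `V⊥`. -/
theorem stmt5 (n m : ℕ) (V : Submodule ℝ (EuclideanSpace ℝ (Fin n)))
    (hVdim : Module.finrank ℝ V = m) (α : ℝ) (hα0 : 0 < α) (hα1 : α < 1)
    (A : Set (EuclideanSpace ℝ (Fin n))) :
    IsPlanar V α A ↔
      ∃ f : EuclideanSpace ℝ (Fin n) → EuclideanSpace ℝ (Fin n),
        (∀ v, f v ∈ Vᗮ) ∧
        LipschitzOnWith (Real.toNNReal (α / Real.sqrt (1 - α^2))) f (projV V '' A) ∧
        A = (fun v => v + f v) '' (projV V '' A) := by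
  set s : ℝ := Real.sqrt (1 - α ^ 2) with hs
  have h1α : (0:ℝ) < 1 - α ^ 2 := by nlinarith
  have hspos : 0 < s := Real.sqrt_pos.2 h1α
  have hssq : s ^ 2 = 1 - α ^ 2 := Real.sq_sqrt h1α.le
  set L : ℝ := α / s with hL
  have hLpos : 0 < L := div_pos hα0 hspos
  have hLcoe : ((Real.toNNReal L : NNReal) : ℝ) = L := Real.coe_toNNReal _ hLpos.le
  constructor
  · intro hA
    -- key quantitative estimate
    have key : ∀ x ∈ A, ∀ y ∈ A,
        ‖projV Vᗮ y - projV Vᗮ x‖ ≤ L * ‖projV V y - projV V x‖ := by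
      intro x hx y hy
      have hq := hA x hx y hy
      have hpy := projV_pyth V (y - x)
      set p := ‖projV V (y - x)‖ with hp
      set q := ‖projV Vᗮ (y - x)‖ with hq'
      have hp0 : 0 ≤ p := norm_nonneg _
      have hq0 : 0 ≤ q := norm_nonneg _
      have hqsq : (1 - α ^ 2) * q ^ 2 ≤ α ^ 2 * p ^ 2 := by
        have hd0 : 0 ≤ ‖y - x‖ := norm_nonneg _
        nlinarith [hq, hpy, mul_le_mul_of_nonneg_left hq (mul_nonneg hα0.le hd0)]
      have hsq : s * q ≤ α * p := by
        nlinarith [sq_nonneg (s * q - α * p), sq_nonneg (s * q + α * p),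
          mul_nonneg hspos.le hq0, mul_nonneg hα0.le hp0]
      have : q ≤ L * p := by
        rw [hL, div_mul_eq_mul_div, le_div_iff₀ hspos]
        linarith [hsq]
      calc ‖projV Vᗮ y - projV Vᗮ x‖ = q := by rw [hq', projV_sub]
        _ ≤ L * p := this
        _ = L * ‖projV V y - projV V x‖ := by rw [hp, projV_sub]
    -- if projections agree, orthogonal parts agree
    have wd : ∀ x ∈ A, ∀ y ∈ A, projV V x = projV V y → projV Vᗮ x = projV Vᗮ y := by
      intro x hx y hy h
      have := key x hx y hy
      rw [h, sub_self, norm_zero, mul_zero] at this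
      exact (sub_eq_zero.1 (norm_le_zero_iff.1 this)).symm
    classical
    refine ⟨fun v => if h : v ∈ projV V '' A then projV Vᗮ h.choose else 0, ?_, ?_, ?_⟩
    · intro v
      dsimp only
      split
      · exact (Submodule.orthogonalProjectionOnto Vᗮ _).2
      · exact Vᗮ.zero_mem
    · apply LipschitzOnWith.of_dist_le_mul
      intro v hv w hw
      rw [hLcoe, dist_eq_norm, dist_eq_norm]
      have hcv := hv.choose_spec
      have hcw := hw.choose_spec
      rw [dif_pos hv, dif_pos hw]
      have := key hw.choose hcw.1 hv.choose hcv.1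
      rw [hcv.2, hcw.2] at this
      exact this
    · ext x
      constructor
      · intro hx
        have h : projV V x ∈ projV V '' A := ⟨x, hx, rfl⟩
        refine ⟨projV V x, h, ?_⟩
        have hc := h.choose_spec
        show projV V x + (if h' : projV V x ∈ projV V '' A then projV Vᗮ h'.choose else 0) = x
        rw [dif_pos h]
        rw [wd h.choose hc.1 x hx hc.2]
        exact projV_add_projV_orthogonal V x
      · rintro ⟨v, hv, hvx⟩
        have hc := hv.choose_spec
        have : v + (if h' : v ∈ projV V '' A then projV Vᗮ h'.choose else 0) = x := hvx
        rw [dif_pos hv] at this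
        have hxeq : x = projV V hv.choose + projV Vᗮ hv.choose := by
          rw [hc.2]; exact this.symm
        rw [projV_add_projV_orthogonal] at hxeq
        rw [hxeq]; exact hc.1
  · intro ⟨f, hfmem, hflip, hfA⟩
    intro x hx y hy
    obtain ⟨v, hv, hvx⟩ := hfA ▸ hx
    obtain ⟨w, hw, hwy⟩ := hfA ▸ hy
    change v + f v = x at hvx
    change w + f w = y at hwy
    have hvV : v ∈ V := by
      obtain ⟨a, _, ha⟩ := hv
      rw [← ha]; exact (Submodule.orthogonalProjectionOnto V a).2
    have hwV : w ∈ V := by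
      obtain ⟨a, _, ha⟩ := hw
      rw [← ha]; exact (Submodule.orthogonalProjectionOnto V a).2
    have hdiff : y - x = (w - v) + (f w - f v) := by
      rw [← hvx, ← hwy]; abel
    have hproj : projV Vᗮ (y - x) = f w - f v := by
      rw [hdiff]
      have h1 : Submodule.orthogonalProjectionOnto Vᗮ (w - v) = 0 :=
        Submodule.orthogonalProjectionOnto_apply_of_mem_orthogonal
          (by rw [Submodule.orthogonal_orthogonal]; exact V.sub_mem hwV hvV)
      have h2 : Submodule.orthogonalProjectionOnto Vᗮ (f w - f v)
          = (⟨f w - f v, Vᗮ.sub_mem (hfmem w) (hfmem v)⟩ : Vᗮ) := by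
        exact Submodule.orthogonalProjectionOnto_mem_subspace_eq_self
          (⟨f w - f v, Vᗮ.sub_mem (hfmem w) (hfmem v)⟩ : Vᗮ)
      simp [projV, map_add, h1, h2]
    have hlip : ‖f w - f v‖ ≤ L * ‖w - v‖ := by
      have := hflip hw hv
      rw [edist_nndist] at this
      have h' := (LipschitzOnWith.dist_le_mul hflip) w hw v hv
      rw [hLcoe, dist_eq_norm, dist_eq_norm] at h'
      exact h'
    -- Pythagoras for y - x
    have hpy : ‖y - x‖ ^ 2 = ‖w - v‖ ^ 2 + ‖f w - f v‖ ^ 2 := by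
      have h1 : projV V (y - x) = w - v := by
        have hsum := projV_add_projV_orthogonal V (y - x)
        rw [hproj] at hsum
        have h2 : projV V (y - x) + (f w - f v) = w - v + (f w - f v) := by
          rw [hsum, hdiff]
        exact add_right_cancel h2
      have hpp := projV_pyth V (y - x)
      rw [h1, hproj] at hpp; exact hpp
    set a := ‖w - v‖ with ha
    set b := ‖f w - f v‖ with hb
    have ha0 : 0 ≤ a := norm_nonneg _
    have hb0 : 0 ≤ b := norm_nonneg _
    rw [hproj, ← hb]
    -- b ≤ L a, so (1-α²) b² ≤ α² a², so b² ≤ α² (a²+b²) = α²‖y-x‖²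
    have hb2 : (1 - α ^ 2) * b ^ 2 ≤ α ^ 2 * a ^ 2 := by
      have h2 : s ^ 2 * b ^ 2 ≤ α ^ 2 * a ^ 2 := by
        have : s * b ≤ α * a := by
          rw [hL, div_mul_eq_mul_div, le_div_iff₀ hspos] at hlip
          linarith [hlip]
        nlinarith [mul_nonneg hspos.le hb0]
      rw [hssq] at h2; exact h2
    have hbsq : b ^ 2 ≤ α ^ 2 * ‖y - x‖ ^ 2 := by
      rw [hpy]; nlinarith
    have hyx0 : 0 ≤ α * ‖y - x‖ := mul_nonneg hα0.le (norm_nonneg _)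
    have hbsq' : b ^ 2 ≤ (α * ‖y - x‖) ^ 2 := by rw [mul_pow]; exact hbsq
    exact (pow_le_pow_iff_left₀ hb0 hyx0 two_ne_zero).1 hbsq'
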